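/- Under the same coefficient system as above (with |p₁|,|q₁|,|p₂|,|q₂| ≤ 2), one has a₃ = (1−β)²(p₁²+q₁²)/(2(λ+μ+2ξδ)²) + (1−β)(p₂−q₂)/(2(2λ+μ+6ξδ)), and consequently |a₃| ≤ 4(1−β)²/(λ+μ+2ξδ)² + 2(1−β)/(2λ+μ+6ξδ). -/

import Mathlib

open Complex

theorem a3_formula_and_bound_theorem31
    (a₂ a₃ p₁ p₂ q₁ q₂ : ℂ) (beta lam mu del xi : ℝ)
    (hbeta : 0 ≤ beta ∧ beta < 1) (hlam : 1 ≤ lam) (hmu : 0 ≤ mu) (hdel : 0 ≤ del)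
    (hxi : xi = (2 * lam + mu) / (2 * lam + 1))
    (h1 : ((lam : ℂ) + mu + 2 * xi * del) * a₂ = (1 - (beta : ℂ)) * p₁)
    (h2 : (2 * (lam : ℂ) + mu) * (((mu : ℂ) - 1) / 2 * a₂ ^ 2
            + (1 + 6 * (del : ℂ) / (2 * lam + 1)) * a₃) = (1 - (beta : ℂ)) * p₂)
    (h3 : -(((lam : ℂ) + mu + 2 * xi * del) * a₂) = (1 - (beta : ℂ)) * q₁)
    (h4 : (2 * (lam : ℂ) + mu) * ((((mu : ℂ) + 3) / 2 + 12 * (del : ℂ) / (2 * lam + 1)) * a₂ ^ 2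
            - (1 + 6 * (del : ℂ) / (2 * lam + 1)) * a₃) = (1 - (beta : ℂ)) * q₂)
    (hp₁ : ‖p₁‖ ≤ 2) (hq₁ : ‖q₁‖ ≤ 2) (hp₂ : ‖p₂‖ ≤ 2) (hq₂ : ‖q₂‖ ≤ 2) :
    a₃ = (1 - (beta : ℂ)) ^ 2 * (p₁ ^ 2 + q₁ ^ 2) / (2 * ((lam : ℂ) + mu + 2 * xi * del) ^ 2)
        + (1 - (beta : ℂ)) * (p₂ - q₂) / (2 * (2 * (lam : ℂ) + mu + 6 * xi * del)) ∧
    ‖a₃‖ ≤ 4 * (1 - beta) ^ 2 / (lam + mu + 2 * xi * del) ^ 2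
        + 2 * (1 - beta) / (2 * lam + mu + 6 * xi * del) := by
  obtain ⟨hb0, hb1⟩ := hbeta
  have h2l : (0:ℝ) < 2*lam+1 := by linarith
  have hxiR : xi*(2*lam+1) = 2*lam+mu := by rw [hxi]; field_simp
  have hxipos : 0 ≤ xi := by
    rw [hxi]; positivity
  have hAR : (1:ℝ) ≤ lam+mu+2*xi*del := by nlinarith [mul_nonneg hxipos hdel]
  have hBR : (2:ℝ) ≤ 2*lam+mu+6*xi*del := by nlinarith [mul_nonneg hxipos hdel]
  have hbC : (1-(beta:ℂ)) ≠ 0 := by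
    intro h
    have : (beta:ℂ) = 1 := by linear_combination -h
    have : beta = 1 := by exact_mod_cast this
    linarith
  have hAC : ((lam:ℂ) + mu + 2*xi*del) ≠ 0 := by
    have : ((lam+mu+2*xi*del : ℝ):ℂ) ≠ 0 := by
      exact_mod_cast (by linarith : (lam+mu+2*xi*del:ℝ) ≠ 0)
    push_cast at this
    convert this using 1
  have hBC : ((2:ℂ)*lam + mu + 6*xi*del) ≠ 0 := by
    have : ((2*lam+mu+6*xi*del : ℝ):ℂ) ≠ 0 := by
      exact_mod_cast (by linarith : (2*lam+mu+6*xi*del:ℝ) ≠ 0)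
    push_cast at this
    convert this using 1
  have h2lC : ((2:ℂ)*lam + 1) ≠ 0 := by
    have : ((2*lam+1 : ℝ):ℂ) ≠ 0 := by
      exact_mod_cast (by linarith : (2*lam+1:ℝ) ≠ 0)
    push_cast at this
    convert this using 1
  have hxiC : (xi:ℂ) * (2*lam+1) = 2*lam+mu := by exact_mod_cast congrArg (Complex.ofReal) hxiR
  have hq : q₁ = -p₁ := by
    have := h3
    rw [h1] at this
    have h' : (1-(beta:ℂ)) * q₁ = (1-(beta:ℂ)) * (-p₁) := by linear_combination -this
    exact mul_left_cancel₀ hbC h'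
  have hkey : (2*(lam:ℂ)+mu) * (1 + 6*(del:ℂ)/(2*lam+1)) = 2*lam+mu+6*xi*del := by
    field_simp
    linear_combination (-6*(del:ℂ))*hxiC
  have h12 : (2*(lam:ℂ)+mu) * (12*(del:ℂ)/(2*lam+1)) = 12*xi*del := by
    field_simp
    linear_combination (-(del:ℂ))*hxiC
  have h2' : (2*(lam:ℂ)+mu) * (((mu:ℂ)-1)/2) * a₂^2 + (2*(lam:ℂ)+mu+6*xi*del) * a₃
      = (1-(beta:ℂ))*p₂ := by
    linear_combination h2 + a₃ * hkey - a₃ * h12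
  have h4' : (2*(lam:ℂ)+mu) * (((mu:ℂ)+3)/2) * a₂^2 + 12*(xi:ℂ)*del*a₂^2
      - (2*(lam:ℂ)+mu+6*xi*del) * a₃ = (1-(beta:ℂ))*q₂ := by
    linear_combination h4 + (a₃ - a₂^2) * h12 - a₃ * hkey
  have hf : a₃ = a₂^2 + (1-(beta:ℂ))*(p₂-q₂)/(2*(2*(lam:ℂ)+mu+6*xi*del)) := by
    field_simp
    linear_combination h2' - h4'
  have ha2sq : a₂^2 = (1-(beta:ℂ))^2 * (p₁^2+q₁^2) / (2*((lam:ℂ)+mu+2*xi*del)^2) := by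
    rw [hq]
    field_simp
    linear_combination (2*(((lam:ℂ)+mu+2*xi*del)*a₂ + (1-(beta:ℂ))*p₁))*h1
  have hformula : a₃ = (1 - (beta : ℂ)) ^ 2 * (p₁ ^ 2 + q₁ ^ 2) / (2 * ((lam : ℂ) + mu + 2 * xi * del) ^ 2)
        + (1 - (beta : ℂ)) * (p₂ - q₂) / (2 * (2 * (lam : ℂ) + mu + 6 * xi * del)) := by
    rw [hf, ha2sq]
  refine ⟨hformula, ?_⟩
  set A : ℝ := lam+mu+2*xi*del with hA
  set B : ℝ := 2*lam+mu+6*xi*del with hB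
  have e1 : (1 - (beta : ℂ)) ^ 2 * (p₁ ^ 2 + q₁ ^ 2) / (2 * ((lam : ℂ) + mu + 2 * xi * del) ^ 2)
      = (((1-beta)^2/(2*A^2) : ℝ):ℂ) * (p₁^2+q₁^2) := by
    push_cast [hA]
    ring
  have e2 : (1 - (beta : ℂ)) * (p₂ - q₂) / (2 * (2 * (lam : ℂ) + mu + 6 * xi * del))
      = (((1-beta)/(2*B) : ℝ):ℂ) * (p₂-q₂) := by
    push_cast [hB]
    ring
  have hApos : (0:ℝ) < A := by rw [hA]; linarith
  have hBpos : (0:ℝ) < B := by rw [hB]; linarith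
  have hr1 : (0:ℝ) ≤ (1-beta)^2/(2*A^2) := by positivity
  have hr2 : (0:ℝ) ≤ (1-beta)/(2*B) := by
    have : (0:ℝ) ≤ 1-beta := by linarith
    positivity
  have hn1 : ‖p₁^2+q₁^2‖ ≤ 8 := by
    have h := norm_add_le (p₁^2) (q₁^2)
    rw [norm_pow, norm_pow] at h
    nlinarith [norm_nonneg p₁, norm_nonneg q₁]
  have hn2 : ‖p₂-q₂‖ ≤ 4 := by
    calc ‖p₂-q₂‖ ≤ ‖p₂‖ + ‖q₂‖ := norm_sub_le _ _
    _ ≤ 2 + 2 := by gcongr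
    _ = 4 := by norm_num
  calc ‖a₃‖ = ‖(((1-beta)^2/(2*A^2) : ℝ):ℂ) * (p₁^2+q₁^2) + (((1-beta)/(2*B) : ℝ):ℂ) * (p₂-q₂)‖ := by
        rw [hformula, e1, e2]
    _ ≤ ‖(((1-beta)^2/(2*A^2) : ℝ):ℂ) * (p₁^2+q₁^2)‖ + ‖(((1-beta)/(2*B) : ℝ):ℂ) * (p₂-q₂)‖ :=
        norm_add_le _ _
    _ = ((1-beta)^2/(2*A^2)) * ‖p₁^2+q₁^2‖ + ((1-beta)/(2*B)) * ‖p₂-q₂‖ := by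
        rw [norm_mul, norm_mul, Complex.norm_real, Complex.norm_real, Real.norm_eq_abs, Real.norm_eq_abs,
          _root_.abs_of_nonneg hr1, _root_.abs_of_nonneg hr2]
    _ ≤ ((1-beta)^2/(2*A^2)) * 8 + ((1-beta)/(2*B)) * 4 := by gcongr
    _ = 4 * (1 - beta) ^ 2 / A ^ 2 + 2 * (1 - beta) / B := by
        field_simp
        ring
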